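/- Let m ≥ 1 and L > 0, let f : ℝ^m → ℝ be differentiable with L-Lipschitz gradient on the nonnegative orthant ℝ^m_+, and let λ* ∈ ℝ^m_+ satisfy f(λ*) ≤ f(μ) for all μ ∈ ℝ^m_+. Then for every λ ∈ ℝ^m_+, writing I := {i : λ_i > (∂f/∂λ_i)(λ)/L} and I' for its complement in {1, …, m}, it holds that (1/(2L))·Σ_{i ∈ I} ((∂f/∂λ_i)(λ))² + (1/2)·Σ_{i ∈ I'} (∂f/∂λ_i)(λ)·λ_i ≤ f(λ) − f(λ*). -/

import Mathlib

open InnerProductSpace intervalIntegral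

lemma descent_lemma {E : Type*} [NormedAddCommGroup E] [InnerProductSpace ℝ E] [CompleteSpace E]
    (f : E → ℝ) (hf : Differentiable ℝ f) (L : ℝ) (hL : 0 < L) (s : Set E) (hs : Convex ℝ s)
    (hlip : ∀ x ∈ s, ∀ y ∈ s, ‖gradient f x - gradient f y‖ ≤ L * ‖x - y‖)
    (x y : E) (hx : x ∈ s) (hy : y ∈ s) :
    f y ≤ f x + inner ℝ (gradient f x) (y - x) + L / 2 * ‖y - x‖ ^ 2 := by
  set g := y - x with hg
  set γ : ℝ → E := fun t => x + t • g with hγdef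
  have hγmem : ∀ t ∈ Set.Icc (0:ℝ) 1, γ t ∈ s := fun t ht => hs.add_smul_sub_mem hx hy ht
  have hγderiv : ∀ t : ℝ, HasDerivAt γ g t := by
    intro t
    simpa [hγdef] using ((hasDerivAt_id t).smul_const g).const_add x
  have hφ : ∀ t : ℝ, HasDerivAt (fun u => f (γ u)) (inner ℝ (gradient f (γ t)) g : ℝ) t := by
    intro t
    have h1 := (hf (γ t)).hasGradientAt.hasFDerivAt
    have := h1.comp_hasDerivAt t (hγderiv t)
    simpa [InnerProductSpace.toDual_apply_apply, Function.comp_def] using this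
  have hcont : ContinuousOn (fun t => (inner ℝ (gradient f (γ t)) g : ℝ)) (Set.Icc (0:ℝ) 1) := by
    have hgl : ContinuousOn (fun t => gradient f (γ t)) (Set.Icc (0:ℝ) 1) := by
      have : LipschitzOnWith (L * ‖g‖).toNNReal (fun t => gradient f (γ t)) (Set.Icc (0:ℝ) 1) := by
        rw [lipschitzOnWith_iff_dist_le_mul]
        intro a ha b hb
        rw [dist_eq_norm, dist_eq_norm]
        calc ‖gradient f (γ a) - gradient f (γ b)‖ ≤ L * ‖γ a - γ b‖ :=
              hlip _ (hγmem a ha) _ (hγmem b hb)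
          _ ≤ (L * ‖g‖).toNNReal * ‖a - b‖ := by
              have : γ a - γ b = (a - b) • g := by
                simp [hγdef, sub_smul]
              rw [this, norm_smul]
              have h1 : L * (‖a - b‖ * ‖g‖) ≤ (L * ‖g‖).toNNReal * ‖a - b‖ := by
                have : (L * ‖g‖ : ℝ) ≤ ((L * ‖g‖).toNNReal : ℝ) := Real.le_coe_toNNReal _
                nlinarith [norm_nonneg (a - b), norm_nonneg g, mul_le_mul_of_nonneg_left this (norm_nonneg (a-b))]
              simpa [norm_smul] using h1
      exact this.continuousOn
    exact hgl.inner continuousOn_const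
  have hint : IntervalIntegrable (fun t => (inner ℝ (gradient f (γ t)) g : ℝ)) MeasureTheory.volume 0 1 := by
    apply ContinuousOn.intervalIntegrable
    rwa [Set.uIcc_of_le zero_le_one]
  have key : (∫ t in (0:ℝ)..1, (inner ℝ (gradient f (γ t)) g : ℝ)) = f (γ 1) - f (γ 0) :=
    intervalIntegral.integral_eq_sub_of_hasDerivAt (f := fun u => f (γ u)) (fun t _ => hφ t) hint
  have hγ0 : γ 0 = x := by simp [hγdef]
  have hγ1 : γ 1 = y := by simp [hγdef, hg]
  have hptwise : ∀ t ∈ Set.Icc (0:ℝ) 1,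
      (inner ℝ (gradient f (γ t)) g : ℝ) ≤ inner ℝ (gradient f x) g + L * t * ‖g‖ ^ 2 := by
    intro t ht
    have h1 : (inner ℝ (gradient f (γ t)) g : ℝ) =
        inner ℝ (gradient f x) g + inner ℝ (gradient f (γ t) - gradient f x) g := by
      rw [inner_sub_left]; ring
    rw [h1]
    have h2 : (inner ℝ (gradient f (γ t) - gradient f x) g : ℝ) ≤
        ‖gradient f (γ t) - gradient f x‖ * ‖g‖ := real_inner_le_norm _ _
    have h3 : ‖gradient f (γ t) - gradient f x‖ ≤ L * (t * ‖g‖) := by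
      have := hlip _ (hγmem t ht) _ hx
      have h4 : γ t - x = t • g := by simp [hγdef]
      rw [h4, norm_smul, Real.norm_eq_abs, abs_of_nonneg ht.1] at this
      exact this
    nlinarith [norm_nonneg g, ht.1]
  have hc1 : Continuous (fun t : ℝ => (inner ℝ (gradient f x) g : ℝ)) := continuous_const
  have hc2 : Continuous (fun t : ℝ => L * t * ‖g‖ ^ 2) :=
    (continuous_const.mul continuous_id).mul continuous_const
  have hrhsint : IntervalIntegrable (fun t => (inner ℝ (gradient f x) g : ℝ) + L * t * ‖g‖ ^ 2)
      MeasureTheory.volume 0 1 := (hc1.add hc2).intervalIntegrable 0 1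
  have hmono : (∫ t in (0:ℝ)..1, (inner ℝ (gradient f (γ t)) g : ℝ)) ≤
      ∫ t in (0:ℝ)..1, ((inner ℝ (gradient f x) g : ℝ) + L * t * ‖g‖ ^ 2) := by
    apply intervalIntegral.integral_mono_on zero_le_one hint hrhsint hptwise
  have hval : (∫ t in (0:ℝ)..1, ((inner ℝ (gradient f x) g : ℝ) + L * t * ‖g‖ ^ 2))
      = inner ℝ (gradient f x) g + L / 2 * ‖g‖ ^ 2 := by
    rw [intervalIntegral.integral_add (hc1.intervalIntegrable 0 1) (hc2.intervalIntegrable 0 1)]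
    simp only [intervalIntegral.integral_const, smul_eq_mul]
    have : (∫ t in (0:ℝ)..1, L * t * ‖g‖ ^ 2) = L / 2 * ‖g‖ ^ 2 := by
      have : (fun t : ℝ => L * t * ‖g‖ ^ 2) = fun t : ℝ => (L * ‖g‖ ^ 2) * t := by
        funext t; ring
      rw [this, intervalIntegral.integral_const_mul, integral_id]
      ring
    rw [this]; ring
  rw [hγ0, hγ1] at key
  linarith [hmono, key, hval.le, hval.ge]

theorem stmt_11 (m : ℕ) (hm : 1 ≤ m) (L : ℝ) (hL : 0 < L)
    (f : EuclideanSpace ℝ (Fin m) → ℝ) (hf : Differentiable ℝ f)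
    (hlip : ∀ x : EuclideanSpace ℝ (Fin m), (∀ i, 0 ≤ x i) →
      ∀ y : EuclideanSpace ℝ (Fin m), (∀ i, 0 ≤ y i) →
      ‖gradient f x - gradient f y‖ ≤ L * ‖x - y‖)
    (lstar : EuclideanSpace ℝ (Fin m)) (hstar : ∀ i, 0 ≤ lstar i)
    (hmin : ∀ μ : EuclideanSpace ℝ (Fin m), (∀ i, 0 ≤ μ i) → f lstar ≤ f μ)
    (lam : EuclideanSpace ℝ (Fin m)) (hlam : ∀ i, 0 ≤ lam i) :
    (1 / (2 * L)) * (∑ i ∈ Finset.univ.filter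
        (fun i => gradient f lam i / L < lam i), (gradient f lam i) ^ 2)
      + (1 / 2) * (∑ i ∈ Finset.univ.filter
        (fun i => ¬ gradient f lam i / L < lam i), gradient f lam i * lam i)
      ≤ f lam - f lstar := by
  classical
  set G := gradient f lam with hG
  set S : Set (EuclideanSpace ℝ (Fin m)) := {x | ∀ i, 0 ≤ x i} with hS
  have hSconv : Convex ℝ S := by
    intro a ha b hb p q hp hq hpq
    intro i
    have : (p • a + q • b) i = p * a i + q * b i := rfl
    rw [this]
    have := ha i; have := hb i
    positivity
  set y : EuclideanSpace ℝ (Fin m) := WithLp.toLp 2 (fun i => if G i / L < lam i then lam i - G i / L else 0)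
    with hy
  have hynn : ∀ i, 0 ≤ y i := by
    intro i
    show (0:ℝ) ≤ if G i / L < lam i then lam i - G i / L else 0
    split
    · linarith [le_of_lt ‹G i / L < lam i›]
    · exact le_refl (0:ℝ)
  have hdesc := descent_lemma f hf L hL S hSconv
    (fun a ha b hb => hlip a ha b hb) lam y hlam hynn
  have hstar_le : f lstar ≤ f y := hmin y hynn
  have hinner : (inner ℝ G (y - lam) : ℝ) = ∑ i, G i * (y i - lam i) := by
    simp only [PiLp.inner_apply, RCLike.inner_apply', conj_trivial, PiLp.sub_apply]
  have hnorm : ‖y - lam‖ ^ 2 = ∑ i, (y i - lam i) * (y i - lam i) := by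
    rw [← real_inner_self_eq_norm_sq]
    simp only [PiLp.inner_apply, RCLike.inner_apply', conj_trivial, PiLp.sub_apply]
  have hdi : ∀ i : Fin m, y i - lam i = if G i / L < lam i then -(G i / L) else -(lam i) := by
    intro i
    show (if G i / L < lam i then lam i - G i / L else 0) - lam i = _
    split <;> ring
  have hterm : ∑ i, (G i * (y i - lam i) + L / 2 * ((y i - lam i) * (y i - lam i)))
      ≤ -((1 / (2 * L)) * ∑ i ∈ Finset.univ.filter (fun i => G i / L < lam i), (G i) ^ 2)
        - (1 / 2) * ∑ i ∈ Finset.univ.filter (fun i => ¬ G i / L < lam i), G i * lam i := by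
    rw [← Finset.sum_filter_add_sum_filter_not Finset.univ (fun i => G i / L < lam i)
      (fun i => G i * (y i - lam i) + L / 2 * ((y i - lam i) * (y i - lam i)))]
    have h1 : ∑ i ∈ Finset.univ.filter (fun i => G i / L < lam i),
        (G i * (y i - lam i) + L / 2 * ((y i - lam i) * (y i - lam i)))
        = -((1 / (2 * L)) * ∑ i ∈ Finset.univ.filter (fun i => G i / L < lam i), (G i) ^ 2) := by
      rw [Finset.mul_sum, ← Finset.sum_neg_distrib]
      apply Finset.sum_congr rfl
      intro i hi
      rw [Finset.mem_filter] at hi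
      rw [hdi i, if_pos hi.2]
      field_simp
      ring
    have h2 : ∑ i ∈ Finset.univ.filter (fun i => ¬ G i / L < lam i),
        (G i * (y i - lam i) + L / 2 * ((y i - lam i) * (y i - lam i)))
        ≤ -((1 / 2) * ∑ i ∈ Finset.univ.filter (fun i => ¬ G i / L < lam i), G i * lam i) := by
      rw [Finset.mul_sum, ← Finset.sum_neg_distrib]
      apply Finset.sum_le_sum
      intro i hi
      rw [Finset.mem_filter] at hi
      rw [hdi i, if_neg hi.2]
      have hle : L * lam i ≤ G i := by
        have h := mul_le_mul_of_nonneg_left (not_lt.mp hi.2) hL.le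
        have h2 : L * (G i / L) = G i := by field_simp
        linarith
      have hln : 0 ≤ lam i := hlam i
      nlinarith
    linarith
  have hsum : (inner ℝ G (y - lam) : ℝ) + L / 2 * ‖y - lam‖ ^ 2
      = ∑ i, (G i * (y i - lam i) + L / 2 * ((y i - lam i) * (y i - lam i))) := by
    rw [hinner, hnorm, Finset.sum_add_distrib, Finset.mul_sum]
  have hfin := hdesc
  rw [← hG] at hfin
  linarith [hstar_le, hfin, hterm, hsum]
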